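/- (Geodesic trapping estimate, core of Step 1) Let ω : [0, L] → ℝ³ be a C² unit-speed curve with ω(0) = q, ω'(0) = e₃, and ∫₀^L |ω''(s)| ds < π/4. Then for all s ∈ [0, L]: ⟨ω'(s), e₃⟩ > √2/2, |⟨ω'(s), e₁⟩| < √2/2, and |⟨ω'(s), e₂⟩| < √2/2. Consequently ⟨ω(L) − ω(0), e₃⟩ > (√2/2) L. -/

import Mathlib

open Real Set
open scoped RealInnerProductSpace

noncomputable def e₁ : EuclideanSpace ℝ (Fin 3) := EuclideanSpace.single 0 1
noncomputable def e₂ : EuclideanSpace ℝ (Fin 3) := EuclideanSpace.single 1 1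
noncomputable def e₃ : EuclideanSpace ℝ (Fin 3) := EuclideanSpace.single 2 1

lemma abs_lt_sqrt2div2 (x : ℝ) (hx : x^2 < 1/2) : |x| < Real.sqrt 2 / 2 := by
  nlinarith [Real.sq_sqrt (by norm_num : (0:ℝ) ≤ 2), Real.sqrt_nonneg 2, sq_abs x, abs_nonneg x]

/-- Geodesic trapping estimate: if `ω` is a C² unit-speed curve on `[0, L]`
with `ω'(0) = e₃` and total turning `∫₀^L |ω''| < π/4`, then on all of `[0,L]`
`⟨ω', e₃⟩ > √2/2`, `|⟨ω', e₁⟩| < √2/2`, `|⟨ω', e₂⟩| < √2/2`, and consequently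
`⟨ω(L) − ω(0), e₃⟩ > (√2/2)·L`. -/
theorem stmt15 (L : ℝ) (hL : 0 < L)
    (ω ω' ω'' : ℝ → EuclideanSpace ℝ (Fin 3))
    (hd1 : ∀ s, HasDerivAt ω (ω' s) s)
    (hd2 : ∀ s, HasDerivAt ω' (ω'' s) s)
    (hcont : Continuous ω'')
    (hunit : ∀ s, ‖ω' s‖ = 1)
    (hstart : ω' 0 = e₃)
    (hturn : ∫ s in (0 : ℝ)..L, ‖ω'' s‖ < π / 4) :
    (∀ s ∈ Icc (0 : ℝ) L,
        ⟪ω' s, e₃⟫ > Real.sqrt 2 / 2 ∧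
        |⟪ω' s, e₁⟫| < Real.sqrt 2 / 2 ∧
        |⟪ω' s, e₂⟫| < Real.sqrt 2 / 2) ∧
      ⟪ω L - ω 0, e₃⟫ > (Real.sqrt 2 / 2) * L := by
  have hω'cont : Continuous ω' := continuous_iff_continuousAt.2 fun s => (hd2 s).continuousAt
  set f : ℝ → ℝ := fun s => ⟪ω' s, e₃⟫ with hf_def
  have hfc : Continuous f := hω'cont.inner continuous_const
  have hfderiv : ∀ s, HasDerivAt f (⟪ω'' s, e₃⟫) s := by
    intro s
    have := (hd2 s).inner ℝ (hasDerivAt_const s e₃)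
    simpa using this
  -- orthogonality of ω'' and ω'
  have horth : ∀ s, ⟪ω'' s, ω' s⟫ = 0 := by
    intro s
    have h1 : HasDerivAt (fun t => ⟪ω' t, ω' t⟫) (⟪ω' s, ω'' s⟫ + ⟪ω'' s, ω' s⟫) s :=
      (hd2 s).inner ℝ (hd2 s)
    have h2 : (fun t : ℝ => ⟪ω' t, ω' t⟫) = fun _ : ℝ => (1:ℝ) := by
      funext t
      rw [real_inner_self_eq_norm_sq, hunit t]; norm_num
    rw [h2] at h1
    have h3 : (0:ℝ) = ⟪ω' s, ω'' s⟫ + ⟪ω'' s, ω' s⟫ := (hasDerivAt_const s (1:ℝ)).unique h1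
    have h4 : ⟪ω' s, ω'' s⟫ = ⟪ω'' s, ω' s⟫ := real_inner_comm _ _
    linarith
  have he₃ : ‖e₃‖ = 1 := by simp [e₃]
  have hfle : ∀ s, |f s| ≤ 1 := by
    intro s
    calc |f s| ≤ ‖ω' s‖ * ‖e₃‖ := abs_real_inner_le_norm _ _
    _ = 1 := by rw [hunit s, he₃, mul_one]
  -- Cauchy-Schwarz:  |f'| ≤ ‖ω''‖ √(1-f²)
  have hkey : ∀ s, |⟪ω'' s, e₃⟫| ≤ ‖ω'' s‖ * Real.sqrt (1 - f s ^ 2) := by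
    intro s
    have h1 : ⟪ω'' s, e₃⟫ = ⟪ω'' s, e₃ - f s • ω' s⟫ := by
      rw [inner_sub_right, real_inner_smul_right, horth s, mul_zero, sub_zero]
    have h2 : ‖e₃ - f s • ω' s‖ ^ 2 = 1 - f s ^ 2 := by
      rw [norm_sub_sq_real, real_inner_smul_right, norm_smul, he₃]
      have : ⟪e₃, ω' s⟫ = f s := real_inner_comm _ _
      rw [this, hunit s]
      simp [mul_pow, sq_abs]
      ring
    have h3 : ‖e₃ - f s • ω' s‖ = Real.sqrt (1 - f s ^ 2) := by
      rw [← h2, Real.sqrt_sq (norm_nonneg _)]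
    rw [h1]
    calc |⟪ω'' s, e₃ - f s • ω' s⟫| ≤ ‖ω'' s‖ * ‖e₃ - f s • ω' s‖ := abs_real_inner_le_norm _ _
    _ = ‖ω'' s‖ * Real.sqrt (1 - f s ^ 2) := by rw [h3]
  -- set up the comparison function
  set I := ∫ s in (0 : ℝ)..L, ‖ω'' s‖ with hI
  have hdI : 0 < π/4 - I := by simp only [hI]; linarith
  set ε : ℝ := (π/4 - I) / (3 * L) with hε_def
  set δ : ℝ := (π/4 - I) / 3 with hδ_def
  have hε : 0 < ε := div_pos hdI (by linarith)
  have hδ : 0 < δ := div_pos hdI (by norm_num)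
  set h : ℝ → ℝ := fun s => ‖ω'' s‖ + ε with hh_def
  have hh : Continuous h := hcont.norm.add continuous_const
  have hhpos : ∀ s, 0 < h s := fun s => by positivity
  set A : ℝ → ℝ := fun s => ∫ t in (0:ℝ)..s, h t with hA_def
  have hA : ∀ s, HasDerivAt A (h s) s := fun s =>
    intervalIntegral.integral_hasDerivAt_right (hh.intervalIntegrable _ _)
      (hh.stronglyMeasurableAtFilter _ _) hh.continuousAt
  have hAmono : StrictMono A :=
    strictMono_of_deriv_pos (fun s => by rw [(hA s).deriv]; exact hhpos s)
  have hA0 : A 0 = 0 := intervalIntegral.integral_same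
  have hAL : A L = I + L * ε := by
    simp only [hA_def, hh_def]
    rw [intervalIntegral.integral_add (hcont.norm.intervalIntegrable _ _)
      (intervalIntegrable_const), intervalIntegral.integral_const, smul_eq_mul, sub_zero,
      ← hI, mul_comm]
  have hALδ : A L + δ < π/4 := by
    rw [hAL, hε_def, hδ_def]
    have : L * ((π/4 - I) / (3 * L)) = (π/4 - I) / 3 := by
      field_simp
    rw [this]
    linarith
  have hθbound : ∀ s ∈ Icc (0:ℝ) L, 0 < A s + δ ∧ A s + δ < π/4 := by
    intro s hs
    have h1 : A 0 ≤ A s := hAmono.monotone hs.1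
    have h2 : A s ≤ A L := hAmono.monotone hs.2
    constructor
    · rw [hA0] at h1; linarith
    · linarith
  -- the fencing argument
  set B : ℝ → ℝ := fun s => -Real.cos (A s + δ) with hB_def
  set B' : ℝ → ℝ := fun s => h s * Real.sin (A s + δ) with hB'_def
  have hB : ∀ s, HasDerivAt B (B' s) s := by
    intro s
    have h1 : HasDerivAt (fun t => A t + δ) (h s) s := (hA s).add_const δ
    have h2 := ((Real.hasDerivAt_cos (A s + δ)).comp s h1).neg
    refine h2.congr_deriv ?_
    simp [hB'_def]
    ring
  have main : ∀ s ∈ Icc (0:ℝ) L, Real.cos (A s + δ) ≤ f s := by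
    have hfence := image_le_of_deriv_right_lt_deriv_boundary
      (f := fun s => -f s) (f' := fun s => -⟪ω'' s, e₃⟫) (a := 0) (b := L) (B := B) (B' := B')
      (hfc.neg.continuousOn)
      (fun x _ => ((hfderiv x).neg).hasDerivWithinAt)
      (by
        -- -f 0 ≤ B 0
        have hf0 : f 0 = 1 := by
          simp only [hf_def, hstart]
          rw [real_inner_self_eq_norm_sq, he₃]; norm_num
        have : Real.cos (A 0 + δ) ≤ 1 := Real.cos_le_one _
        simp only [hB_def, hf0]
        linarith)
      hB
      (by
        intro x hx hcontact
        have hxIcc : x ∈ Icc (0:ℝ) L := ⟨hx.1, hx.2.le⟩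
        obtain ⟨hθ0, hθ4⟩ := hθbound x hxIcc
        have hθπ : A x + δ < π := lt_trans hθ4 (by linarith [Real.pi_pos])
        have hsin : 0 < Real.sin (A x + δ) := Real.sin_pos_of_pos_of_lt_pi hθ0 hθπ
        have hfx : f x = Real.cos (A x + δ) := by
          simp only [hB_def] at hcontact; linarith
        have hsq : 1 - f x ^ 2 = Real.sin (A x + δ) ^ 2 := by
          rw [hfx, Real.sin_sq]
        have hsqrt : Real.sqrt (1 - f x ^ 2) = Real.sin (A x + δ) := by
          rw [hsq, Real.sqrt_sq hsin.le]
        have h1 := hkey x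
        rw [hsqrt] at h1
        have h2 : -⟪ω'' x, e₃⟫ ≤ ‖ω'' x‖ * Real.sin (A x + δ) :=
          le_trans (neg_le_abs _) h1
        have h3 : ‖ω'' x‖ * Real.sin (A x + δ) < h x * Real.sin (A x + δ) := by
          apply mul_lt_mul_of_pos_right _ hsin
          simp only [hh_def]; linarith
        calc -⟪ω'' x, e₃⟫ ≤ ‖ω'' x‖ * Real.sin (A x + δ) := h2
        _ < B' x := h3)
    intro s hs
    have := hfence hs
    simp only [hB_def] at this
    linarith
  -- pointwise conclusions
  have hpoint : ∀ s ∈ Icc (0:ℝ) L, Real.sqrt 2 / 2 < f s := by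
    intro s hs
    obtain ⟨hθ0, hθ4⟩ := hθbound s hs
    have hπ4 : π/4 ≤ π := by linarith [Real.pi_pos]
    have : Real.cos (π/4) < Real.cos (A s + δ) :=
      Real.cos_lt_cos_of_nonneg_of_le_pi hθ0.le hπ4 hθ4
    rw [Real.cos_pi_div_four] at this
    linarith [main s hs]
  have hcoords : ∀ s, ((ω' s) 0)^2 + ((ω' s) 1)^2 + ((ω' s) 2)^2 = 1 := by
    intro s
    have h1 := hunit s
    rw [EuclideanSpace.norm_eq] at h1
    have h2 : ∑ i : Fin 3, ‖(ω' s) i‖^2 = 1 := by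
      have := congrArg (· ^ 2) h1
      simpa [Real.sq_sqrt (Finset.sum_nonneg fun i _ => sq_nonneg _)] using this
    rw [Fin.sum_univ_three] at h2
    simpa [Real.norm_eq_abs, sq_abs] using h2
  have hinner3 : ∀ s, f s = (ω' s) 2 := by
    intro s
    simp [hf_def, e₃, EuclideanSpace.inner_single_right]
  have hinner1 : ∀ s, ⟪ω' s, e₁⟫ = (ω' s) 0 := by
    intro s
    simp [e₁, EuclideanSpace.inner_single_right]
  have hinner2 : ∀ s, ⟪ω' s, e₂⟫ = (ω' s) 1 := by
    intro s
    simp [e₂, EuclideanSpace.inner_single_right]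
  have hall : ∀ s ∈ Icc (0:ℝ) L,
      ⟪ω' s, e₃⟫ > Real.sqrt 2 / 2 ∧
      |⟪ω' s, e₁⟫| < Real.sqrt 2 / 2 ∧
      |⟪ω' s, e₂⟫| < Real.sqrt 2 / 2 := by
    intro s hs
    have h3 := hpoint s hs
    have h2sq : 1/2 < ((ω' s) 2)^2 := by
      rw [← hinner3 s]
      nlinarith [Real.sq_sqrt (by norm_num : (0:ℝ) ≤ 2), Real.sqrt_nonneg 2]
    have hsum := hcoords s
    refine ⟨h3, ?_, ?_⟩
    · rw [hinner1 s]
      exact abs_lt_sqrt2div2 _ (by nlinarith [sq_nonneg ((ω' s) 1)])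
    · rw [hinner2 s]
      exact abs_lt_sqrt2div2 _ (by nlinarith [sq_nonneg ((ω' s) 0)])
  refine ⟨hall, ?_⟩
  -- integral conclusion
  set c : ℝ := Real.cos (A L + δ) with hc_def
  have hcgt : Real.sqrt 2 / 2 < c := by
    have hθ0 : 0 < A L + δ := (hθbound L ⟨hL.le, le_refl L⟩).1
    have hπ4 : π/4 ≤ π := by linarith [Real.pi_pos]
    have : Real.cos (π/4) < Real.cos (A L + δ) :=
      Real.cos_lt_cos_of_nonneg_of_le_pi hθ0.le hπ4 hALδ
    rw [Real.cos_pi_div_four] at this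
    linarith
  have hlb : ∀ s ∈ Icc (0:ℝ) L, c ≤ f s := by
    intro s hs
    have h1 : A s + δ ≤ A L + δ := by linarith [hAmono.monotone hs.2]
    have h2 : Real.cos (A L + δ) ≤ Real.cos (A s + δ) := by
      apply Real.cos_le_cos_of_nonneg_of_le_pi (hθbound s hs).1.le _ h1
      linarith [Real.pi_pos, hALδ]
    linarith [main s hs]
  have hftc : ∫ s in (0:ℝ)..L, f s = ⟪ω L, e₃⟫ - ⟪ω 0, e₃⟫ := by
    apply intervalIntegral.integral_eq_sub_of_hasDerivAt
    · intro s _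
      have := (hd1 s).inner ℝ (hasDerivAt_const s e₃)
      simpa using this
    · exact hfc.intervalIntegrable _ _
  have hmono : ∫ s in (0:ℝ)..L, c ≤ ∫ s in (0:ℝ)..L, f s := by
    apply intervalIntegral.integral_mono_on hL.le intervalIntegrable_const
      (hfc.intervalIntegrable _ _)
    exact hlb
  have hconst : ∫ s in (0:ℝ)..L, c = c * L := by
    rw [intervalIntegral.integral_const]
    simp [mul_comm]
  have : ⟪ω L - ω 0, e₃⟫ = ∫ s in (0:ℝ)..L, f s := by
    rw [inner_sub_left, hftc]
  rw [this]
  have : Real.sqrt 2 / 2 * L < c * L := mul_lt_mul_of_pos_right hcgt hL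
  linarith [hmono, hconst.symm.le, hconst.le]
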